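/- For every positive integer n, the number of monomials appearing in the determinant of the generic n × n circulant matrix is at most the number appearing in its permanent, i.e., d(n) ≤ p(n). -/

import Mathlib

open MvPolynomial Finset

private lemma prod_X_eq_monomial {n : ℕ} (f : Fin n → Fin n) :
    (∏ i, MvPolynomial.X (f i) : MvPolynomial (Fin n) ℚ) =
      MvPolynomial.monomial (∑ i, Finsupp.single (f i) 1) (1 : ℚ) := by
  classical
  induction (Finset.univ : Finset (Fin n)) using Finset.induction with
  | empty => simp
  | insert _ _ h ih =>
    rw [Finset.prod_insert h, Finset.sum_insert h, ih, MvPolynomial.X,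
      MvPolynomial.monomial_mul, one_mul]

theorem stmt_14 (n : ℕ) (hn : 0 < n)
    (A : Matrix (Fin n) (Fin n) (MvPolynomial (Fin n) ℚ))
    (hA : ∀ i j, A i j = MvPolynomial.X (i + j)) :
    A.det.support.card
      ≤ (∑ σ : Equiv.Perm (Fin n), ∏ i, A i (σ i)).support.card := by
  classical
  set s : Equiv.Perm (Fin n) → (Fin n →₀ ℕ) :=
    fun σ => ∑ i, Finsupp.single (i + σ i) 1 with hs
  have hP : ∀ σ : Equiv.Perm (Fin n),
      (∏ i, A i (σ i)) = MvPolynomial.monomial (s σ) (1 : ℚ) := by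
    intro σ
    simp only [hA]
    exact prod_X_eq_monomial _
  have hD : ∀ σ : Equiv.Perm (Fin n),
      (∏ i, A (σ i) i) = MvPolynomial.monomial (s σ) (1 : ℚ) := by
    intro σ
    simp only [hA]
    rw [prod_X_eq_monomial]
    congr 1
    simp [hs, add_comm]
  apply Finset.card_le_card
  intro d hd
  rw [MvPolynomial.mem_support_iff] at hd ⊢
  rw [Matrix.det_apply] at hd
  simp only [MvPolynomial.coeff_sum, hD, hP, MvPolynomial.coeff_smul,
    MvPolynomial.coeff_monomial] at hd ⊢
  have hex : ∃ σ : Equiv.Perm (Fin n), s σ = d := by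
    by_contra h
    push_neg at h
    apply hd
    apply Finset.sum_eq_zero
    intro σ _
    simp [h σ]
  obtain ⟨σ₀, hσ₀⟩ := hex
  have : (0:ℚ) < ∑ σ : Equiv.Perm (Fin n), if s σ = d then (1:ℚ) else 0 := by
    apply Finset.sum_pos'
    · intro σ _
      split <;> norm_num
    · exact ⟨σ₀, Finset.mem_univ _, by simp [hσ₀]⟩
  exact ne_of_gt this
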